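/- Let x ∈ S_{n+1} and let i, j be values with 0 < i, j, such that i occurs to the left of j in the one-line notation of x (i.e. x^{-1}(i) < x^{-1}(j)), and both occur to the right of 0. Let t_{(0,i)} and t_{(0,j)} denote the transpositions swapping 0 with i and with j. If i > j then t_{(0,i)}x and t_{(0,j)}x are incomparable in Bruhat order; if i < j then t_{(0,i)}x < t_{(0,j)}x in Bruhat order. -/

import Mathlib

open Polynomial

/-- Number of inversions (the Coxeter length) of a permutation of `Fin n`. -/
def invCount {n : ℕ} (x : Equiv.Perm (Fin n)) : ℕ :=
  (Finset.univ.filter (fun p : Fin n × Fin n => p.1 < p.2 ∧ x p.2 < x p.1)).card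

/-- Bruhat order on the symmetric group `S_n = Perm (Fin n)`: `x ≤ y` iff there is an
upward path from `x` to `y` in the Bruhat graph (edges: multiplication by a transposition,
oriented by increasing length). -/
def BruhatLE {n : ℕ} (x y : Equiv.Perm (Fin n)) : Prop :=
  Relation.ReflTransGen
    (fun u v => (∃ i j : Fin n, i ≠ j ∧ v = Equiv.swap i j * u) ∧ invCount u < invCount v)
    x y

def BruhatLT {n : ℕ} (x y : Equiv.Perm (Fin n)) : Prop :=
  BruhatLE x y ∧ x ≠ y

lemma invCount_eq_sum {n : ℕ} (x : Equiv.Perm (Fin n)) :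
    invCount x = ∑ P : Fin n × Fin n, (if P.1 < P.2 ∧ x P.2 < x P.1 then 1 else 0) := by
  rw [invCount, Finset.card_filter]

lemma invCount_lt_swap_mul {m : ℕ} (u : Equiv.Perm (Fin m)) {v1 v2 : Fin m}
    (h12 : v1 < v2) (hpos : u⁻¹ v1 < u⁻¹ v2) :
    invCount u < invCount (Equiv.swap v1 v2 * u) := by
  set a := u⁻¹ v1 with ha
  set b := u⁻¹ v2 with hb
  set w := Equiv.swap v1 v2 * u with hwdef
  have hab : a < b := hpos
  have hua : u a = v1 := u.apply_symm_apply v1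
  have hub : u b = v2 := u.apply_symm_apply v2
  have hane : a ≠ b := ne_of_lt hab
  have hne12 : v1 ≠ v2 := ne_of_lt h12
  have hwa : w a = v2 := by
    rw [hwdef, Equiv.Perm.mul_apply, hua, Equiv.swap_apply_left]
  have hwb : w b = v1 := by
    rw [hwdef, Equiv.Perm.mul_apply, hub, Equiv.swap_apply_right]
  have hune : ∀ r : Fin m, r ≠ a → r ≠ b → (u r ≠ v1 ∧ u r ≠ v2) := by
    intro r h1 h2
    constructor
    · intro h; exact h1 (by rw [ha, ← h, Equiv.Perm.coe_inv, Equiv.symm_apply_apply])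
    · intro h; exact h2 (by rw [hb, ← h, Equiv.Perm.coe_inv, Equiv.symm_apply_apply])
  have hwr : ∀ r : Fin m, r ≠ a → r ≠ b → w r = u r := by
    intro r h1 h2
    obtain ⟨e1, e2⟩ := hune r h1 h2
    rw [hwdef, Equiv.Perm.mul_apply, Equiv.swap_apply_of_ne_of_ne e1 e2]
  -- the involution
  set θ : Fin m × Fin m → Fin m × Fin m := fun P =>
    if (a < P.1 ∧ P.1 < b) ∨ (a < P.2 ∧ P.2 < b) then P
    else (Equiv.swap a b P.1, Equiv.swap a b P.2) with hθ
  have hσ : ∀ r : Fin m, ¬(a < r ∧ r < b) → ¬(a < Equiv.swap a b r ∧ Equiv.swap a b r < b) := by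
    intro r hr
    rcases eq_or_ne r a with rfl | h1
    · rw [Equiv.swap_apply_left]; exact fun h => lt_irrefl _ h.2
    rcases eq_or_ne r b with rfl | h2
    · rw [Equiv.swap_apply_right]; exact fun h => lt_irrefl _ h.1
    · rw [Equiv.swap_apply_of_ne_of_ne h1 h2]; exact hr
  have hinv : Function.Involutive θ := by
    intro P
    by_cases h : (a < P.1 ∧ P.1 < b) ∨ (a < P.2 ∧ P.2 < b)
    · simp only [hθ, if_pos h]
    · have h1 : ¬(a < P.1 ∧ P.1 < b) := fun h' => h (Or.inl h')
      have h2 : ¬(a < P.2 ∧ P.2 < b) := fun h' => h (Or.inr h')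
      simp only [hθ, if_neg h]
      have hc : ¬((a < Equiv.swap a b P.1 ∧ Equiv.swap a b P.1 < b) ∨
          (a < Equiv.swap a b P.2 ∧ Equiv.swap a b P.2 < b)) := by
        rintro (h' | h')
        · exact hσ _ h1 h'
        · exact hσ _ h2 h'
      rw [if_neg hc]
      simp [Equiv.swap_apply_self]
  have hwσ : ∀ r : Fin m, w (Equiv.swap a b r) = u r := by
    intro r
    rcases eq_or_ne r a with rfl | h1
    · rw [Equiv.swap_apply_left, hwb, hua]
    rcases eq_or_ne r b with rfl | h2
    · rw [Equiv.swap_apply_right, hwa, hub]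
    · rw [Equiv.swap_apply_of_ne_of_ne h1 h2, hwr r h1 h2]
  have key : ∀ P : Fin m × Fin m,
      (if P.1 < P.2 ∧ u P.2 < u P.1 then 1 else 0) ≤
      (if (θ P).1 < (θ P).2 ∧ w (θ P).2 < w (θ P).1 then (1:ℕ) else 0) := by
    rintro ⟨p, q⟩
    by_cases hPQ : p < q ∧ u q < u p
    · obtain ⟨hpq, huqp⟩ := hPQ
      have goal2 : (θ (p, q)).1 < (θ (p, q)).2 ∧ w (θ (p, q)).2 < w (θ (p, q)).1 := by
        by_cases hc : (a < p ∧ p < b) ∨ (a < q ∧ q < b)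
        · simp only [hθ, if_pos hc]
          rcases eq_or_ne p a with rfl | hpa
          · -- p = a
            have hq : a < q ∧ q < b := by
              rcases hc with h' | h'
              · exact absurd h'.1 (lt_irrefl _)
              · exact h'
            have hqa : q ≠ a := ne_of_gt hq.1
            have hqb : q ≠ b := ne_of_lt hq.2
            refine ⟨hpq, ?_⟩
            rw [hwa, hwr q hqa hqb]
            calc u q < v1 := hua ▸ huqp
              _ < v2 := h12
          rcases eq_or_ne p b with rfl | hpb
          · exfalso
            rcases hc with h' | h'
            · exact absurd h'.2 (lt_irrefl _)
            · exact absurd (h'.2.trans hpq) (lt_irrefl _)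
          rcases eq_or_ne q a with rfl | hqa
          · exfalso
            rcases hc with h' | h'
            · exact absurd (hpq.trans h'.1) (lt_irrefl _)
            · exact absurd h'.1 (lt_irrefl _)
          rcases eq_or_ne q b with rfl | hqb
          · refine ⟨hpq, ?_⟩
            rw [hwb, hwr p hpa hpb]
            calc v1 < v2 := h12
              _ < u p := hub ▸ huqp
          · refine ⟨hpq, ?_⟩
            rw [hwr p hpa hpb, hwr q hqa hqb]
            exact huqp
        · simp only [hθ, if_neg hc]
          have h1 : ¬(a < p ∧ p < b) := fun h' => hc (Or.inl h')
          have h2 : ¬(a < q ∧ q < b) := fun h' => hc (Or.inr h')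
          refine ⟨?_, by rw [hwσ, hwσ]; exact huqp⟩
          -- order: swap a b p < swap a b q
          rcases eq_or_ne p a with rfl | hpa
          · rw [Equiv.swap_apply_left]
            have hqa : q ≠ a := ne_of_gt hpq
            rcases eq_or_ne q b with rfl | hqb
            · exact absurd huqp (by rw [hua, hub]; exact not_lt_of_gt h12)
            · rw [Equiv.swap_apply_of_ne_of_ne hqa hqb]
              rcases lt_or_ge b q with h' | h'
              · exact h'
              · exact absurd ⟨hpq, lt_of_le_of_ne h' hqb⟩ h2
          rcases eq_or_ne p b with rfl | hpb
          · rw [Equiv.swap_apply_right]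
            have hqb : q ≠ b := ne_of_gt hpq
            have hqa : q ≠ a := ne_of_gt (hab.trans hpq)
            rw [Equiv.swap_apply_of_ne_of_ne hqa hqb]
            exact hab.trans hpq
          rcases eq_or_ne q a with rfl | hqa
          · rw [Equiv.swap_apply_left, Equiv.swap_apply_of_ne_of_ne hpa hpb]
            exact hpq.trans hab
          rcases eq_or_ne q b with rfl | hqb
          · rw [Equiv.swap_apply_right, Equiv.swap_apply_of_ne_of_ne hpa hpb]
            rcases lt_or_ge p a with h' | h'
            · exact h'
            · exact absurd ⟨lt_of_le_of_ne h' (Ne.symm hpa), hpq⟩ h1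
          · rw [Equiv.swap_apply_of_ne_of_ne hpa hpb,
              Equiv.swap_apply_of_ne_of_ne hqa hqb]
            exact hpq
      rw [if_pos ⟨hpq, huqp⟩, if_pos goal2]
    · rw [if_neg hPQ]; exact Nat.zero_le _
  have strict : (if (b, a).1 < (b, a).2 ∧ u (b, a).2 < u (b, a).1 then (1:ℕ) else 0) <
      (if (θ (b, a)).1 < (θ (b, a)).2 ∧ w (θ (b, a)).2 < w (θ (b, a)).1 then (1:ℕ) else 0) := by
    have hc : ¬((a < b ∧ b < b) ∨ (a < a ∧ a < b)) := by
      rintro (h' | h')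
      · exact lt_irrefl _ h'.2
      · exact lt_irrefl _ h'.1
    have hθba : θ (b, a) = (a, b) := by
      simp only [hθ, if_neg hc, Equiv.swap_apply_left, Equiv.swap_apply_right]
    rw [hθba]
    rw [if_neg (by rintro ⟨h', -⟩; exact absurd (h'.trans hab) (lt_irrefl _))]
    rw [if_pos ⟨hab, by rw [hwa, hwb]; exact h12⟩]
    norm_num
  calc invCount u = ∑ P : Fin m × Fin m, (if P.1 < P.2 ∧ u P.2 < u P.1 then 1 else 0) :=
        invCount_eq_sum u
    _ < ∑ P : Fin m × Fin m,
        (if (θ P).1 < (θ P).2 ∧ w (θ P).2 < w (θ P).1 then 1 else 0) := by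
        apply Finset.sum_lt_sum (fun P _ => key P) ⟨(b, a), Finset.mem_univ _, strict⟩
    _ = ∑ P : Fin m × Fin m, (if P.1 < P.2 ∧ w P.2 < w P.1 then 1 else 0) :=
        Equiv.sum_comp hinv.toPerm (fun P => if P.1 < P.2 ∧ w P.2 < w P.1 then 1 else 0)
    _ = invCount w := (invCount_eq_sum w).symm

lemma card_mono_aux {m : ℕ} (u : Equiv.Perm (Fin m)) {i j : Fin m} (hij : i < j)
    (hlen : invCount u < invCount (Equiv.swap i j * u)) (p₀ k : Fin m) :
    (Finset.univ.filter (fun q => q ≤ p₀ ∧ k ≤ u q)).card ≤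
    (Finset.univ.filter (fun q => q ≤ p₀ ∧ k ≤ (Equiv.swap i j * u) q)).card := by
  have hijne : i ≠ j := ne_of_lt hij
  have hne : u⁻¹ i ≠ u⁻¹ j := fun h => hijne (by
    have := congrArg u h
    rwa [Equiv.Perm.coe_inv, u.apply_symm_apply, u.apply_symm_apply] at this)
  have hpos : u⁻¹ i < u⁻¹ j := by
    rcases hne.lt_or_gt with h | h
    · exact h
    · exfalso
      have h1 : (Equiv.swap i j * u)⁻¹ i < (Equiv.swap i j * u)⁻¹ j := by
        rw [mul_inv_rev, Equiv.swap_inv, Equiv.Perm.mul_apply, Equiv.Perm.mul_apply,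
          Equiv.swap_apply_left, Equiv.swap_apply_right]
        exact h
      have h2 := invCount_lt_swap_mul (Equiv.swap i j * u) hij h1
      rw [← mul_assoc, Equiv.swap_mul_self, one_mul] at h2
      exact absurd hlen (not_lt_of_gt h2)
  set a := u⁻¹ i with ha
  set b := u⁻¹ j with hb
  set v := Equiv.swap i j * u with hv
  have hab : a < b := hpos
  have hua : u a = i := u.apply_symm_apply i
  have hub : u b = j := u.apply_symm_apply j
  have hva : v a = j := by rw [hv, Equiv.Perm.mul_apply, hua, Equiv.swap_apply_left]
  have hvb : v b = i := by rw [hv, Equiv.Perm.mul_apply, hub, Equiv.swap_apply_right]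
  have hvr : ∀ r : Fin m, r ≠ a → r ≠ b → v r = u r := by
    intro r h1 h2
    have e1 : u r ≠ i := fun h => h1 (by rw [ha, ← h, Equiv.Perm.coe_inv, Equiv.symm_apply_apply])
    have e2 : u r ≠ j := fun h => h2 (by rw [hb, ← h, Equiv.Perm.coe_inv, Equiv.symm_apply_apply])
    rw [hv, Equiv.Perm.mul_apply, Equiv.swap_apply_of_ne_of_ne e1 e2]
  apply Finset.card_le_card_of_injOn (fun q => if q = b ∧ i < k then a else q)
  · intro q hq
    simp only [Finset.mem_coe, Finset.mem_filter, Finset.mem_univ, true_and] at hq ⊢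
    obtain ⟨hq1, hq2⟩ := hq
    split_ifs with hcond
    · obtain ⟨rfl, hik⟩ := hcond
      rw [hub] at hq2
      exact ⟨le_trans hab.le hq1, by rw [hva]; exact hq2⟩
    · refine ⟨hq1, ?_⟩
      rcases eq_or_ne q a with rfl | hqa
      · rw [hva]; exact le_trans (hua ▸ hq2) hij.le
      rcases eq_or_ne q b with rfl | hqb
      · rw [hvb]
        have : ¬ i < k := fun h => hcond ⟨rfl, h⟩
        exact le_of_not_gt this
      · rw [hvr q hqa hqb]; exact hq2
  · intro q1 h1 q2 h2 heq
    simp only [Finset.coe_filter, Set.mem_setOf_eq, Finset.mem_univ, true_and] at h1 h2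
    simp only at heq
    split_ifs at heq with c1 c2 c2
    · exact c1.1.trans c2.1.symm
    · exfalso
      subst heq
      exact absurd (hua ▸ h2.2) (not_le_of_gt c1.2)
    · exfalso
      subst heq
      exact absurd (hua ▸ h1.2) (not_le_of_gt c2.2)
    · exact heq

lemma edge_mono {m : ℕ} {u v : Equiv.Perm (Fin m)}
    (h : (∃ i j : Fin m, i ≠ j ∧ v = Equiv.swap i j * u) ∧ invCount u < invCount v)
    (p₀ k : Fin m) :
    (Finset.univ.filter (fun q => q ≤ p₀ ∧ k ≤ u q)).card ≤
    (Finset.univ.filter (fun q => q ≤ p₀ ∧ k ≤ v q)).card := by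
  obtain ⟨⟨i, j, hij, rfl⟩, hlen⟩ := h
  rcases hij.lt_or_gt with hlt | hlt
  · exact card_mono_aux u hlt hlen p₀ k
  · rw [Equiv.swap_comm] at hlen ⊢
    exact card_mono_aux u hlt hlen p₀ k

lemma ble_mono {m : ℕ} {u v : Equiv.Perm (Fin m)} (h : BruhatLE u v) (p₀ k : Fin m) :
    (Finset.univ.filter (fun q => q ≤ p₀ ∧ k ≤ u q)).card ≤
    (Finset.univ.filter (fun q => q ≤ p₀ ∧ k ≤ v q)).card := by
  induction h with
  | refl => exact le_refl _
  | tail _ hedge ih => exact ih.trans (edge_mono hedge p₀ k)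

lemma swap_triple {α : Type*} [DecidableEq α] {o i j : α} (hio : i ≠ o) (hjo : j ≠ o)
    (hij : i ≠ j) :
    Equiv.swap i j * Equiv.swap o j * Equiv.swap o i = Equiv.swap o j := by
  ext k
  simp only [Equiv.Perm.mul_apply]
  rcases eq_or_ne k o with rfl | hko
  · rw [Equiv.swap_apply_left, Equiv.swap_apply_of_ne_of_ne hio hij,
      Equiv.swap_apply_left, Equiv.swap_apply_left]
  rcases eq_or_ne k i with rfl | hki
  · rw [Equiv.swap_apply_right, Equiv.swap_apply_left, Equiv.swap_apply_right,
      Equiv.swap_apply_of_ne_of_ne hio hij]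
  rcases eq_or_ne k j with rfl | hkj
  · rw [Equiv.swap_apply_of_ne_of_ne hjo hij.symm, Equiv.swap_apply_right,
      Equiv.swap_apply_of_ne_of_ne (Ne.symm hio) (Ne.symm hjo)]
  · rw [Equiv.swap_apply_of_ne_of_ne hko hki, Equiv.swap_apply_of_ne_of_ne hko hkj,
      Equiv.swap_apply_of_ne_of_ne hki hkj]

/-- let `x ∈ S_{n+1}` and `i, j` nonzero values occurring to the right of `0`
in the one-line notation of `x`, with `i` to the left of `j`.  If `i > j` then
`t_{(0,i)} x` and `t_{(0,j)} x` are incomparable in Bruhat order; if `i < j` then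
`t_{(0,i)} x < t_{(0,j)} x`. -/
theorem swap_zero_comparisons (n : ℕ) (x : Equiv.Perm (Fin (n + 1))) (i j : Fin (n + 1))
    (hi : 0 < i) (hj : 0 < j)
    (h0i : x⁻¹ 0 < x⁻¹ i) (h0j : x⁻¹ 0 < x⁻¹ j) (hij : x⁻¹ i < x⁻¹ j) :
    (j < i →
      ¬ BruhatLE (Equiv.swap 0 i * x) (Equiv.swap 0 j * x) ∧
      ¬ BruhatLE (Equiv.swap 0 j * x) (Equiv.swap 0 i * x)) ∧
    (i < j → BruhatLT (Equiv.swap 0 i * x) (Equiv.swap 0 j * x)) := by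
  have hi0 : i ≠ 0 := hi.ne'
  have hj0 : j ≠ 0 := hj.ne'
  have hinej : i ≠ j := fun h => absurd hij (by rw [h]; exact lt_irrefl _)
  set c := x⁻¹ 0 with hc
  set a := x⁻¹ i with haa
  set b := x⁻¹ j with hbb
  set y := Equiv.swap 0 i * x with hy
  set z := Equiv.swap 0 j * x with hz
  have hca : c < a := h0i
  have hcb : c < b := h0j
  have hab : a < b := hij
  have hxc : x c = 0 := x.apply_symm_apply 0
  have hxa : x a = i := x.apply_symm_apply i
  have hxb : x b = j := x.apply_symm_apply j
  have hyc : y c = i := by rw [hy, Equiv.Perm.mul_apply, hxc, Equiv.swap_apply_left]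
  have hya : y a = 0 := by rw [hy, Equiv.Perm.mul_apply, hxa, Equiv.swap_apply_right]
  have hzc : z c = j := by rw [hz, Equiv.Perm.mul_apply, hxc, Equiv.swap_apply_left]
  have hza : z a = i := by
    rw [hz, Equiv.Perm.mul_apply, hxa, Equiv.swap_apply_of_ne_of_ne hi0 hinej]
  have hy_other : ∀ q, q ≠ c → q ≠ a → y q = x q := by
    intro q h1 h2
    have e1 : x q ≠ 0 := fun h => h1 (by rw [hc, ← h, Equiv.Perm.coe_inv, Equiv.symm_apply_apply])
    have e2 : x q ≠ i := fun h => h2 (by rw [haa, ← h, Equiv.Perm.coe_inv, Equiv.symm_apply_apply])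
    rw [hy, Equiv.Perm.mul_apply, Equiv.swap_apply_of_ne_of_ne e1 e2]
  have hz_other : ∀ q, q ≠ c → q ≠ b → z q = x q := by
    intro q h1 h2
    have e1 : x q ≠ 0 := fun h => h1 (by rw [hc, ← h, Equiv.Perm.coe_inv, Equiv.symm_apply_apply])
    have e2 : x q ≠ j := fun h => h2 (by rw [hbb, ← h, Equiv.Perm.coe_inv, Equiv.symm_apply_apply])
    rw [hz, Equiv.Perm.mul_apply, Equiv.swap_apply_of_ne_of_ne e1 e2]
  constructor
  · -- j < i : incomparable
    intro hji
    constructor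
    · intro hle
      have hm := ble_mono hle c i
      -- strict reverse inequality
      have hsub : Finset.univ.filter (fun q => q ≤ c ∧ i ≤ z q) ⊆
          Finset.univ.filter (fun q => q ≤ c ∧ i ≤ y q) := by
        intro q hq
        simp only [Finset.mem_filter, Finset.mem_univ, true_and] at hq ⊢
        obtain ⟨hq1, hq2⟩ := hq
        rcases eq_or_ne q c with rfl | hqc
        · rw [hzc] at hq2
          exact absurd hq2 (not_le_of_gt hji)
        · have hqlt : q < c := lt_of_le_of_ne hq1 hqc
          have hqa : q ≠ a := ne_of_lt (hqlt.trans hca)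
          have hqb : q ≠ b := ne_of_lt (hqlt.trans hcb)
          rw [hz_other q hqc hqb] at hq2
          rw [hy_other q hqc hqa]
          exact ⟨hq1, hq2⟩
      have hcy : c ∈ Finset.univ.filter (fun q => q ≤ c ∧ i ≤ y q) := by
        simp only [Finset.mem_filter, Finset.mem_univ, true_and]
        exact ⟨le_refl _, by rw [hyc]⟩
      have hcz : c ∉ Finset.univ.filter (fun q => q ≤ c ∧ i ≤ z q) := by
        simp only [Finset.mem_filter, Finset.mem_univ, true_and]
        rintro ⟨-, h'⟩
        rw [hzc] at h'
        exact absurd h' (not_le_of_gt hji)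
      have hstrict := Finset.card_lt_card (Finset.ssubset_def.mpr
        ⟨hsub, fun hsup => hcz (hsup hcy)⟩)
      exact absurd hm (not_le_of_gt hstrict)
    · intro hle
      have hm := ble_mono hle a j
      have hsub : Finset.univ.filter (fun q => q ≤ a ∧ j ≤ y q) ⊆
          Finset.univ.filter (fun q => q ≤ a ∧ j ≤ z q) := by
        intro q hq
        simp only [Finset.mem_filter, Finset.mem_univ, true_and] at hq ⊢
        obtain ⟨hq1, hq2⟩ := hq
        rcases eq_or_ne q a with rfl | hqa
        · rw [hya] at hq2
          exact absurd hj (not_lt_of_ge hq2)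
        rcases eq_or_ne q c with rfl | hqc
        · exact ⟨hq1, by rw [hzc]⟩
        · have hqlt : q < a := lt_of_le_of_ne hq1 hqa
          have hqb : q ≠ b := ne_of_lt (hqlt.trans hab)
          rw [hy_other q hqc hqa] at hq2
          rw [hz_other q hqc hqb]
          exact ⟨hq1, hq2⟩
      have hay : a ∉ Finset.univ.filter (fun q => q ≤ a ∧ j ≤ y q) := by
        simp only [Finset.mem_filter, Finset.mem_univ, true_and]
        rintro ⟨-, h'⟩
        rw [hya] at h'
        exact absurd hj (not_lt_of_ge h')
      have haz : a ∈ Finset.univ.filter (fun q => q ≤ a ∧ j ≤ z q) := by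
        simp only [Finset.mem_filter, Finset.mem_univ, true_and]
        exact ⟨le_refl _, by rw [hza]; exact hji.le⟩
      have hstrict := Finset.card_lt_card (Finset.ssubset_def.mpr
        ⟨hsub, fun hsup => hay (hsup haz)⟩)
      exact absurd hm (not_le_of_gt hstrict)
  · -- i < j : strictly below
    intro hij'
    constructor
    · -- BruhatLE y z via two covers
      have step1 : (∃ i' j' : Fin (n+1), i' ≠ j' ∧
          Equiv.swap 0 j * y = Equiv.swap i' j' * y) ∧
          invCount y < invCount (Equiv.swap 0 j * y) := by
        refine ⟨⟨0, j, hj.ne, rfl⟩, ?_⟩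
        apply invCount_lt_swap_mul y hj
        rw [hy, mul_inv_rev, Equiv.swap_inv, Equiv.Perm.mul_apply, Equiv.Perm.mul_apply,
          Equiv.swap_apply_left, Equiv.swap_apply_of_ne_of_ne hj0 (Ne.symm hinej)]
        exact hij
      have hzstep : z = Equiv.swap i j * (Equiv.swap 0 j * y) := by
        rw [hy, hz, ← mul_assoc, ← mul_assoc, swap_triple hi0 hj0 hinej]
      have step2 : (∃ i' j' : Fin (n+1), i' ≠ j' ∧
          z = Equiv.swap i' j' * (Equiv.swap 0 j * y)) ∧
          invCount (Equiv.swap 0 j * y) < invCount z := by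
        refine ⟨⟨i, j, hinej, hzstep⟩, ?_⟩
        rw [hzstep]
        apply invCount_lt_swap_mul _ hij'
        rw [hy, mul_inv_rev, mul_inv_rev, Equiv.swap_inv, Equiv.swap_inv,
          Equiv.Perm.mul_apply, Equiv.Perm.mul_apply, Equiv.Perm.mul_apply,
          Equiv.Perm.mul_apply]
        rw [Equiv.swap_apply_of_ne_of_ne hi0 hinej, Equiv.swap_apply_right,
          Equiv.swap_apply_right, Equiv.swap_apply_left]
        exact h0i
      exact Relation.ReflTransGen.tail (Relation.ReflTransGen.single step1) step2
    · intro h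
      have h' := Equiv.ext_iff.mp h a
      rw [hya, hza] at h'
      exact hi0 (h'.symm)
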